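/- For a finite deterministic Markov decision process there exists a uniformly optimal stationary policy: there is a policy π_* : S → A such that for every policy π : S → A and every state x ∈ S, v_{π_*}(x) ≤ v_π(x). -/

import Mathlib

/-- Closed-loop trajectory under a stationary policy. -/
def ctraj {S A : Type*} (f : S → A → S) (pol : S → A) (x : S) : ℕ → S
  | 0 => x
  | t + 1 => f (ctraj f pol x t) (pol (ctraj f pol x t))

/-- Value function of a stationary policy. -/
noncomputable def vpi {S A : Type*} (f : S → A → S) (g : S → A → ℝ) (lam : ℝ)
    (pol : S → A) (x : S) : ℝ :=
  ∑' t : ℕ, lam ^ t * g (ctraj f pol x t) (pol (ctraj f pol x t))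

open Filter Topology Function

section Aux

variable {S A : Type*} [Fintype S] [Nonempty S] [Fintype A] [Nonempty A]
  (f : S → A → S) (g : S → A → ℝ) (lam : ℝ)

lemma ctraj_succ_shift (pol : S → A) (x : S) (t : ℕ) :
    ctraj f pol x (t + 1) = ctraj f pol (f x (pol x)) t := by
  induction t with
  | zero => rfl
  | succ n ih =>
    show f (ctraj f pol x (n + 1)) (pol (ctraj f pol x (n + 1))) = _
    rw [ih]; rfl

lemma vpi_summable (pol : S → A) (x : S) (hlam0 : 0 ≤ lam) (hlam1 : lam < 1) :
    Summable fun t : ℕ => lam ^ t * g (ctraj f pol x t) (pol (ctraj f pol x t)) := by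
  obtain ⟨C, hC⟩ : ∃ C, ∀ (y : S) (a : A), |g y a| ≤ C := by
    refine ⟨Finset.univ.sup' ⟨(Classical.arbitrary (S × A)), Finset.mem_univ _⟩
      (fun p : S × A => |g p.1 p.2|), fun y a => ?_⟩
    exact Finset.le_sup' (fun p : S × A => |g p.1 p.2|) (Finset.mem_univ (y, a))
  refine Summable.of_norm_bounded
    ((summable_geometric_of_lt_one hlam0 hlam1).mul_left C) fun t => ?_
  rw [Real.norm_eq_abs, abs_mul, abs_pow, abs_of_nonneg hlam0, mul_comm]
  exact mul_le_mul_of_nonneg_right (hC _ _) (pow_nonneg hlam0 t)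

lemma vpi_rec (pol : S → A) (x : S) (hlam0 : 0 ≤ lam) (hlam1 : lam < 1) :
    vpi f g lam pol x = g x (pol x) + lam * vpi f g lam pol (f x (pol x)) := by
  have hs := vpi_summable f g lam pol x hlam0 hlam1
  rw [vpi, hs.tsum_eq_zero_add]
  congr 1
  · simp [ctraj]
  · rw [vpi, ← tsum_mul_left]
    refine tsum_congr fun t => ?_
    rw [ctraj_succ_shift]
    ring

/-- Policy evaluation operator. -/
noncomputable def Tpol (pol : S → A) (v : S → ℝ) : S → ℝ :=
  fun x => g x (pol x) + lam * v (f x (pol x))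

/-- Bellman optimality operator. -/
noncomputable def Tstar (v : S → ℝ) : S → ℝ :=
  fun x => Finset.univ.inf' Finset.univ_nonempty (fun a => g x a + lam * v (f x a))

lemma tpol_contracting (pol : S → A) (hlam0 : 0 ≤ lam) (hlam1 : lam < 1) :
    ContractingWith ⟨lam, hlam0⟩ (Tpol f g lam pol) := by
  constructor
  · exact_mod_cast hlam1
  · refine LipschitzWith.of_dist_le_mul fun v w => ?_
    rw [dist_pi_le_iff (by positivity)]
    intro x
    have h1 : dist (Tpol f g lam pol v x) (Tpol f g lam pol w x)
        = lam * dist (v (f x (pol x))) (w (f x (pol x))) := by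
      simp only [Tpol, Real.dist_eq, add_sub_add_left_eq_sub, ← mul_sub, abs_mul,
        abs_of_nonneg hlam0]
    rw [h1]
    exact mul_le_mul_of_nonneg_left (dist_le_pi_dist v w _) hlam0

lemma tstar_sub_le (v w : S → ℝ) (x : S) (hlam0 : 0 ≤ lam) :
    Tstar f g lam v x - Tstar f g lam w x ≤ lam * dist v w := by
  obtain ⟨a, -, ha⟩ := Finset.exists_mem_eq_inf' (Finset.univ_nonempty (α := A))
    (fun a => g x a + lam * w (f x a))
  have h1 : Tstar f g lam v x ≤ g x a + lam * v (f x a) :=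
    Finset.inf'_le _ (Finset.mem_univ a)
  have h2 : Tstar f g lam w x = g x a + lam * w (f x a) := ha
  have h3 : v (f x a) - w (f x a) ≤ dist v w := by
    calc v (f x a) - w (f x a) ≤ |v (f x a) - w (f x a)| := le_abs_self _
    _ = dist (v (f x a)) (w (f x a)) := (Real.dist_eq _ _).symm
    _ ≤ dist v w := dist_le_pi_dist v w _
  nlinarith [mul_le_mul_of_nonneg_left h3 hlam0]

lemma tstar_contracting (hlam0 : 0 ≤ lam) (hlam1 : lam < 1) :
    ContractingWith ⟨lam, hlam0⟩ (Tstar f g lam) := by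
  constructor
  · exact_mod_cast hlam1
  · refine LipschitzWith.of_dist_le_mul fun v w => ?_
    rw [dist_pi_le_iff (by positivity)]
    intro x
    rw [Real.dist_eq, abs_sub_le_iff]
    constructor
    · exact tstar_sub_le f g lam v w x hlam0
    · rw [dist_comm]
      exact tstar_sub_le f g lam w v x hlam0

lemma tpol_monotone (pol : S → A) (hlam0 : 0 ≤ lam) :
    Monotone (Tpol f g lam pol) := fun v w hvw x => by
  have := hvw (f x (pol x))
  simp only [Tpol]
  nlinarith [mul_le_mul_of_nonneg_left (hvw (f x (pol x))) hlam0]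

lemma tstar_le_tpol (pol : S → A) (v : S → ℝ) (x : S) :
    Tstar f g lam v x ≤ Tpol f g lam pol v x :=
  Finset.inf'_le _ (Finset.mem_univ (pol x))

end Aux

theorem exists_uniformly_optimal_policy
    {S A : Type*} [Fintype S] [Nonempty S] [Fintype A] [Nonempty A]
    (f : S → A → S) (g : S → A → ℝ) (lam : ℝ) (hlam0 : 0 < lam) (hlam1 : lam < 1) :
    ∃ polStar : S → A, ∀ (pol : S → A) (x : S),
      vpi f g lam polStar x ≤ vpi f g lam pol x := by
  have hle := hlam0.le
  have cstar := tstar_contracting f g lam hle hlam1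
  set V : S → ℝ := cstar.fixedPoint (Tstar f g lam) with hV
  have hVfix : Tstar f g lam V = V := cstar.fixedPoint_isFixedPt
  -- choose a minimizing action at each state
  have hchoice : ∀ x : S, ∃ a : A, Tstar f g lam V x = g x a + lam * V (f x a) := by
    intro x
    obtain ⟨a, -, ha⟩ := Finset.exists_mem_eq_inf' (Finset.univ_nonempty (α := A))
      (fun a => g x a + lam * V (f x a))
    exact ⟨a, ha⟩
  choose polStar hpolStar using hchoice
  refine ⟨polStar, fun pol x => ?_⟩
  have cpolStar := tpol_contracting f g lam polStar hle hlam1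
  have cpol := tpol_contracting f g lam pol hle hlam1
  -- V is a fixed point of Tpol polStar
  have hVfixStar : Function.IsFixedPt (Tpol f g lam polStar) V := by
    funext y
    calc Tpol f g lam polStar V y = Tstar f g lam V y := (hpolStar y).symm
    _ = V y := by rw [hVfix]
  -- vpi of any policy is a fixed point of its Tpol
  have hvpiFix : ∀ q : S → A, Function.IsFixedPt (Tpol f g lam q) (vpi f g lam q) := by
    intro q
    funext y
    exact (vpi_rec f g lam q y hle hlam1).symm
  -- hence V = vpi polStar
  have hVeq : V = vpi f g lam polStar := by
    have h1 := cpolStar.fixedPoint_unique hVfixStar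
    have h2 := cpolStar.fixedPoint_unique (hvpiFix polStar)
    rw [h1, h2]
  -- V ≤ iterates of Tpol pol applied to V
  have hiter : ∀ n : ℕ, ∀ y : S, V y ≤ (Tpol f g lam pol)^[n] V y := by
    intro n
    induction n with
    | zero => intro y; simp
    | succ m ih =>
      intro y
      rw [Function.iterate_succ_apply']
      calc V y = Tstar f g lam V y := by rw [hVfix]
      _ ≤ Tpol f g lam pol V y := tstar_le_tpol f g lam pol V y
      _ ≤ Tpol f g lam pol ((Tpol f g lam pol)^[m] V) y :=
          tpol_monotone f g lam pol hle ih y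
  -- the iterates converge to vpi pol
  have htend : Tendsto (fun n => (Tpol f g lam pol)^[n] V) atTop
      (𝓝 (vpi f g lam pol)) := by
    have := cpol.tendsto_iterate_fixedPoint V
    rwa [← cpol.fixedPoint_unique (hvpiFix pol)] at this
  have htendx : Tendsto (fun n => (Tpol f g lam pol)^[n] V x) atTop
      (𝓝 (vpi f g lam pol x)) := (tendsto_pi_nhds.mp htend) x
  have hVle : V x ≤ vpi f g lam pol x :=
    ge_of_tendsto htendx (Eventually.of_forall fun n => hiter n x)
  rw [← hVeq]
  exact hVle
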